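/- arXiv:2411.19243 — 3 statements merged into one kernel-verified Lean document; each statement's English description precedes it below -/
import Mathlib

section
/- Let n = kp with the basis e_i = {t_i} - {t_1} (i = 2,...,n) of the Specht module S^{(n-1,1)} over a field F of characteristic p, and let g_1 = (1,2,...,p). Then for b_1 = e_2 and 0 ≤ r ≤ p-2, setting X_1 = g_1 - 1 in FS_n, one has X_1^r b_1 = Σ_{s=1}^{r+1} (-1)^{r-s+1} binom(r+1, s) e_{s+1}. -/
/-- The inverse of the `p`-cycle `g_1 = (1,2,…,p)` as a function on `{1,…,n}` (0-indexed as
`Fin n`): it sends `j ↦ j - 1 (mod p)` for `j < p` and fixes everything else. -/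
def g1inv (p n : ℕ) (hp : 0 < p) (hpn : p ≤ n) (j : Fin n) : Fin n :=
  if (j : ℕ) < p then ⟨((j : ℕ) + (p - 1)) % p, lt_of_lt_of_le (Nat.mod_lt _ hp) hpn⟩ else j

/-- The action of the `p`-cycle `g_1` on the tabloid basis of the permutation module
`M^{(n-1,1)} = (Fin n → F)`: `(g·v)_j = v_{g⁻¹ j}`, i.e. `g` sends tabloid `t_j` to `t_{g j}`. -/
def g1act (F : Type*) [Field F] (p n : ℕ) (hp : 0 < p) (hpn : p ≤ n) :
    (Fin n → F) →ₗ[F] (Fin n → F) where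
  toFun v := fun j => v (g1inv p n hp hpn j)
  map_add' _ _ := rfl
  map_smul' _ _ := rfl

/-- `X_1 = g_1 - 1` acting on the permutation module. -/
def X1 (F : Type*) [Field F] (p n : ℕ) (hp : 0 < p) (hpn : p ≤ n) :
    (Fin n → F) →ₗ[F] (Fin n → F) :=
  g1act F p n hp hpn - LinearMap.id

/-- The vector `e_i = t_i - t_1` of the Specht module `S^{(n-1,1)}` (here `i : Fin n` is the
0-indexed version of the paper's `1`-based index, so `eVec i` is the paper's `e_{i+1}`). -/
def eVec (F : Type*) [Field F] (n : ℕ) (hn : 0 < n) (i : Fin n) : Fin n → F :=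
  Pi.single i 1 - Pi.single ⟨0, hn⟩ 1

lemma negpow (F : Type*) [Field F] (a b : ℕ) (h : b ≤ a) :
    (-1 : F) ^ (a - b) = (-1) ^ (a + b) := by
  have : a + b = (a - b) + 2 * b := by omega
  rw [this, pow_add, pow_mul]
  simp

lemma key (F : Type*) [Field F] (p n : ℕ) (hp : 0 < p) (hpn : p ≤ n) (hn : 0 < n)
    (h1 : 1 < n) (r : ℕ) :
    r + 1 < p → ∀ j : Fin n,
      ((X1 F p n hp hpn) ^ r) (eVec F n hn ⟨1, h1⟩) j =
        if (j : ℕ) ≤ r + 1 then (-1 : F) ^ (r + 1 + (j : ℕ)) * ((r + 1).choose j : F)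
        else 0 := by
  induction r with
  | zero =>
    intro hr j
    rcases j with ⟨j, hj⟩
    simp only [pow_zero, Module.End.one_apply, eVec, Pi.sub_apply, Pi.single_apply]
    by_cases h0 : j = 0
    · subst h0
      simp [Fin.ext_iff]
    · by_cases h1' : j = 1
      · subst h1'
        simp [Fin.ext_iff]
      · have : ¬ j ≤ 1 := by omega
        simp [Fin.ext_iff, h0, h1', this]
  | succ r ih =>
    intro hr j
    have hr' : r + 1 < p := by omega
    rw [pow_succ', Module.End.mul_apply]
    have hX : ∀ (w : Fin n → F) (j : Fin n),
        (X1 F p n hp hpn) w j = w (g1inv p n hp hpn j) - w j := fun _ _ => rfl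
    rw [hX]
    rw [ih hr', ih hr']
    rcases j with ⟨j, hj⟩
    by_cases hjp : j < p
    · rcases Nat.eq_zero_or_pos j with h0 | h0
      · subst h0
        have hg : g1inv p n hp hpn ⟨0, hj⟩ = ⟨p - 1, by omega⟩ := by
          simp only [g1inv, if_pos hp]
          congr 1
          show (0 + (p - 1)) % p = p - 1
          rw [Nat.zero_add]
          exact Nat.mod_eq_of_lt (by omega)
        rw [hg]
        have h1' : ¬ (p - 1 ≤ r + 1) := by omega
        simp only [h1']
        norm_num [pow_succ]
      · have hg : g1inv p n hp hpn ⟨j, hj⟩ = ⟨j - 1, by omega⟩ := by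
          simp only [g1inv, if_pos hjp]
          congr 1
          have : j + (p - 1) = (j - 1) + 1 * p := by omega
          rw [this, Nat.add_mul_mod_self_right, Nat.mod_eq_of_lt (by omega)]
        rw [hg]
        by_cases hle : j ≤ r + 2
        · obtain ⟨j', rfl⟩ : ∃ j', j = j' + 1 := ⟨j - 1, by omega⟩
          have e1 : j' + 1 - 1 = j' := by omega
          have h2 : j' ≤ r + 1 := by omega
          simp only [e1, if_pos h2, if_pos hle]
          by_cases h3 : j' + 1 ≤ r + 1
          · rw [if_pos h3]
            have : (r + 1 + 1).choose (j' + 1) = (r+1).choose j' + (r+1).choose (j'+1) :=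
              Nat.choose_succ_succ _ _
            rw [this]
            push_cast
            ring_nf
          · rw [if_neg h3]
            have hj'' : j' = r + 1 := by omega
            subst hj''
            have : (r + 1 + 1).choose (r + 1 + 1) = 1 := Nat.choose_self _
            rw [this, Nat.choose_self]
            push_cast
            ring_nf
        · have h2 : ¬ (j - 1 ≤ r + 1) := by omega
          have h3 : ¬ (j ≤ r + 1) := by omega
          have h4 : ¬ (j ≤ r + 1 + 1) := by omega
          simp [h2, h3, h4]
    · have hg : g1inv p n hp hpn ⟨j, hj⟩ = ⟨j, hj⟩ := by
        simp only [g1inv, if_neg hjp]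
      rw [hg]
      have h3 : ¬ (j ≤ r + 1) := by omega
      have h4 : ¬ (j ≤ r + 1 + 1) := by omega
      simp [h3, h4]

lemma altsumF (F : Type*) [Field F] (r : ℕ) :
    ∑ s ∈ Finset.range (r + 1), (-1 : F) ^ s * ((r + 1).choose (s + 1) : F) = 1 := by
  have hZ : ∑ m ∈ Finset.range (r + 2), (-1 : ℤ) ^ m * ((r + 1).choose m : ℤ) = 0 := by
    have := Int.alternating_sum_range_choose (n := r + 1)
    simpa using this
  have hF : ∑ m ∈ Finset.range (r + 2), (-1 : F) ^ m * ((r + 1).choose m : F) = 0 := by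
    have := congrArg (Int.cast : ℤ → F) hZ
    push_cast at this
    simpa using this
  rw [Finset.sum_range_succ'] at hF
  have h2 : ∑ i ∈ Finset.range (r + 1), (-1 : F) ^ (i + 1) * ((r + 1).choose (i + 1) : F) =
      -∑ i ∈ Finset.range (r + 1), (-1 : F) ^ i * ((r + 1).choose (i + 1) : F) := by
    rw [← Finset.sum_neg_distrib]
    exact Finset.sum_congr rfl fun i _ => by ring
  rw [h2] at hF
  simp at hF
  linear_combination -hF

/-- Let `n = kp`, `F` of characteristic `p`, and `b_1 = e_2` in the Specht
module `S^{(n-1,1)}` spanned by the `e_i = t_i - t_1`.  Then for `0 ≤ r ≤ p - 2`,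
`X_1^r b_1 = Σ_{s=1}^{r+1} (-1)^{r-s+1} C(r+1, s) e_{s+1}`
(the sum below is reindexed by `s = s' + 1` with `s' : Fin (r+1)`, so that the sign
`(-1)^{r-s+1}` becomes `(-1)^{r-s'}`). -/
theorem stmt7 (F : Type*) [Field F] (p k r : ℕ) [CharP F p] (hp : p.Prime) (hk : 1 ≤ k)
    (hr : r ≤ p - 2) (hpn : p ≤ k * p) (hn : 0 < k * p) :
    ((X1 F p (k * p) hp.pos hpn) ^ r) (eVec F (k * p) hn ⟨1, lt_of_lt_of_le hp.two_le hpn⟩) =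
      ∑ s : Fin (r + 1),
        (((-1 : F) ^ (r - (s : ℕ))) * ((r + 1).choose ((s : ℕ) + 1) : F)) •
          eVec F (k * p) hn ⟨(s : ℕ) + 1, by
            have h1 := s.2
            have h2 := hp.two_le
            omega⟩ := by
  have h2p := hp.two_le
  have h1n : 1 < k * p := lt_of_lt_of_le h2p hpn
  have hrp : r + 1 < p := by omega
  funext j
  rw [key F p (k * p) hp.pos hpn hn h1n r hrp j]
  simp only [Finset.sum_apply, Pi.smul_apply, eVec, Pi.sub_apply, Pi.single_apply,
    smul_eq_mul, Fin.ext_iff]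
  rcases j with ⟨j, hj⟩
  simp only []
  by_cases hj0 : j = 0
  · subst hj0
    have hterm : ∀ s : Fin (r + 1),
        ((-1 : F) ^ (r - (s : ℕ)) * ((r + 1).choose ((s : ℕ) + 1) : F)) *
          ((if (0 : ℕ) = (s : ℕ) + 1 then (1 : F) else 0) - (if (0 : ℕ) = 0 then (1 : F) else 0))
        = -((-1 : F) ^ r * ((-1 : F) ^ (s : ℕ) * ((r + 1).choose ((s : ℕ) + 1) : F))) := by
      intro s
      have hne : ¬ ((0 : ℕ) = (s : ℕ) + 1) := by omega
      rw [if_neg hne, if_pos rfl]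
      rw [negpow F r s (by omega), pow_add]
      ring
    rw [Finset.sum_congr rfl (fun s _ => hterm s)]
    rw [Finset.sum_neg_distrib, ← Finset.mul_sum]
    rw [Fin.sum_univ_eq_sum_range (fun s => (-1 : F) ^ s * ((r + 1).choose (s + 1) : F))]
    rw [altsumF]
    have : (0 : ℕ) ≤ r + 1 := by omega
    rw [if_pos this]
    simp [pow_succ]
  · by_cases hjr : j ≤ r + 1
    · obtain ⟨s0, rfl⟩ : ∃ s0, j = s0 + 1 := ⟨j - 1, by omega⟩
      have hs0 : s0 < r + 1 := by omega
      rw [Finset.sum_eq_single (⟨s0, hs0⟩ : Fin (r + 1))]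
      · have h1 : ((s0 + 1 : ℕ) = ((⟨s0, hs0⟩ : Fin (r+1)) : ℕ) + 1) := rfl
        rw [if_pos h1]
        have h2 : ¬ ((s0 + 1 : ℕ) = 0) := by omega
        rw [if_neg h2, if_pos hjr]
        rw [negpow F r s0 (by omega)]
        have : r + 1 + (s0 + 1) = (r + s0) + 2 := by ring
        rw [this, pow_add]
        ring
      · intro b _ hb
        have h1 : ¬ ((s0 + 1 : ℕ) = (b : ℕ) + 1) := by
          intro h
          apply hb
          exact Fin.ext (show (b:ℕ) = s0 by omega)
        have h2 : ¬ ((s0 + 1 : ℕ) = 0) := by omega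
        rw [if_neg h1, if_neg h2]
        ring
      · intro h
        exact absurd (Finset.mem_univ _) h
    · rw [if_neg hjr]
      symm
      apply Finset.sum_eq_zero
      intro s _
      have h1 : ¬ (j = (s : ℕ) + 1) := by have := s.2; omega
      have h2 : ¬ (j = 0) := hj0
      rw [if_neg h1, if_neg h2]
      ring
end

section
/- Let p be an odd prime, k ≥ 2, and L the (kp-1)×(kp-1) block upper-triangular matrix over a field F of characteristic p whose diagonal blocks are the single nilpotent Jordan-type blocks: L(1,1) of size (p-1) with subdiagonal entries α_1, and L(i,i) of size p with subdiagonal entries α_i for 2 ≤ i ≤ k, and whose only other nonzero blocks are L(1,i) for 2 ≤ i ≤ k having entries -α_1 in positions (1,1) and (2,1). Then rank(L) ≤ (k-1)(p-1) + (p-2), with equality if and only if α_1 α_2 ⋯ α_k ≠ 0. -/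
/-- The block index of global row/column `j` of the `(kp-1) × (kp-1)` matrix `L`: block `0` has
size `p - 1` and the remaining blocks have size `p`. -/
def blkIdx (p j : ℕ) : ℕ := if j < p - 1 then 0 else (j - (p - 1)) / p + 1

/-- The position within its block of global row/column `j`. -/
def posIdx (p j : ℕ) : ℕ := if j < p - 1 then j else (j - (p - 1)) % p

/-- The block upper-triangular matrix `L` (the matrix of `X_α` on the Specht module
`S^{(kp-1,1)}`): the diagonal blocks are nilpotent Jordan-type blocks, of size `p - 1` with
subdiagonal entries `α_1` for the first block and of size `p` with subdiagonal entries `α_i`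
for the `i`-th block (`2 ≤ i ≤ k`); the only other nonzero blocks are `L(1,i)` for
`2 ≤ i ≤ k`, having entries `-α_1` in positions `(1,1)` and `(2,1)`.  (`α` is `0`-indexed,
so `α_i` is `α (i-1)`.) -/
def Lmat (F : Type*) [Field F] (p k : ℕ) (α : ℕ → F) :
    Matrix (Fin (k * p - 1)) (Fin (k * p - 1)) F :=
  fun i j =>
    if blkIdx p (i : ℕ) = blkIdx p (j : ℕ) ∧ posIdx p (i : ℕ) = posIdx p (j : ℕ) + 1 then
      α (blkIdx p (i : ℕ))
    else if blkIdx p (j : ℕ) ≠ 0 ∧ blkIdx p (i : ℕ) = 0 ∧ posIdx p (j : ℕ) = 0 ∧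
        posIdx p (i : ℕ) ≤ 1 then
      -α 0
    else 0
open Finset Submodule

section Aux

variable {p k : ℕ}

lemma blk_pos_repr (hp : 2 ≤ p) (j : ℕ) :
    (blkIdx p j = 0 ∧ posIdx p j = j ∧ j < p - 1) ∨
    (∃ b, blkIdx p j = b + 1 ∧ j = (p - 1) + (p * b + posIdx p j) ∧ posIdx p j < p) := by
  by_cases h : j < p - 1
  · exact Or.inl ⟨by simp [blkIdx, h], by simp [posIdx, h], h⟩
  · right
    refine ⟨(j - (p - 1)) / p, by simp [blkIdx, h], ?_, ?_⟩
    · have h1 := Nat.div_add_mod (j - (p - 1)) p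
      have h2 : posIdx p j = (j - (p - 1)) % p := by simp [posIdx, h]
      rw [h2, h1]; omega
    · have h2 : posIdx p j = (j - (p - 1)) % p := by simp [posIdx, h]
      rw [h2]; exact Nat.mod_lt _ (by omega)

lemma pos_lt (hp : 2 ≤ p) (j : ℕ) : posIdx p j < p := by
  rcases blk_pos_repr hp j with ⟨_, h2, h3⟩ | ⟨b, _, _, h3⟩ <;> omega

lemma pos_lt_of_blk0 (hp : 2 ≤ p) {j : ℕ} (h : blkIdx p j = 0) : posIdx p j < p - 1 := by
  rcases blk_pos_repr hp j with ⟨_, h2, h3⟩ | ⟨b, hb, _, _⟩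
  · omega
  · omega

lemma blk_pos_inj (hp : 2 ≤ p) {a b : ℕ} (h1 : blkIdx p a = blkIdx p b)
    (h2 : posIdx p a = posIdx p b) : a = b := by
  rcases blk_pos_repr hp a with ⟨ha, ha2, ha3⟩ | ⟨qa, ha, ha2, ha3⟩ <;>
    rcases blk_pos_repr hp b with ⟨hb, hb2, hb3⟩ | ⟨qb, hb, hb2, hb3⟩
  · omega
  · rw [ha, hb] at h1; omega
  · rw [ha, hb] at h1; omega
  · rw [ha, hb] at h1
    obtain rfl : qa = qb := by omega
    omega

lemma blk_pos_succ (hp : 2 ≤ p) {j : ℕ}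
    (h1 : posIdx p j + 1 < p) (h2 : blkIdx p j = 0 → posIdx p j + 1 < p - 1) :
    blkIdx p (j + 1) = blkIdx p j ∧ posIdx p (j + 1) = posIdx p j + 1 := by
  rcases blk_pos_repr hp j with ⟨hb, hpos, hlt⟩ | ⟨q, hb, hrep, hlt⟩
  · have hj1 : j + 1 < p - 1 := by rw [hb] at h2; omega
    refine ⟨?_, ?_⟩ <;> simp [blkIdx, posIdx, hj1, hpos, hb, hlt]
  · have hge : ¬ (j + 1 < p - 1) := by omega
    have e1 : posIdx p j + 1 + p * q = j + 1 - (p - 1) := by omega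
    have hA : (j + 1 - (p - 1)) / p = q ∧ (j + 1 - (p - 1)) % p = posIdx p j + 1 :=
      (Nat.div_mod_unique (by omega)).mpr ⟨e1, h1⟩
    constructor
    · rw [hb]; simp only [blkIdx, if_neg hge, hA.1]
    · simp only [posIdx, if_neg hge, hA.2]

lemma blk_pos_pred (hp : 2 ≤ p) {i : ℕ} (h1 : 1 ≤ posIdx p i) :
    1 ≤ i ∧ blkIdx p (i - 1) = blkIdx p i ∧ posIdx p (i - 1) + 1 = posIdx p i := by
  rcases blk_pos_repr hp i with ⟨hb, hpos, hlt⟩ | ⟨q, hb, hrep, hlt⟩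
  · have hi1 : 1 ≤ i := by omega
    have hj1 : i - 1 < p - 1 := by omega
    refine ⟨hi1, ?_, ?_⟩ <;> simp [blkIdx, posIdx, hj1, hpos, hb, hlt] <;> omega
  · have hi1 : 1 ≤ i := by omega
    have hge : ¬ (i - 1 < p - 1) := by omega
    have e1 : posIdx p i - 1 + p * q = i - 1 - (p - 1) := by omega
    have e2 : posIdx p i - 1 < p := by omega
    have hA : (i - 1 - (p - 1)) / p = q ∧ (i - 1 - (p - 1)) % p = posIdx p i - 1 :=
      (Nat.div_mod_unique (by omega)).mpr ⟨e1, e2⟩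
    refine ⟨hi1, ?_, ?_⟩
    · rw [hb]; simp only [blkIdx, if_neg hge, hA.1]
    · have hx : posIdx p (i - 1) = (i - 1 - (p - 1)) % p := by
        rw [posIdx, if_neg hge]
      rw [hx, hA.2]; omega

lemma blk_lt (hp : 2 ≤ p) (hk : 1 ≤ k) {j : ℕ} (hj : j < k * p - 1) : blkIdx p j < k := by
  rcases blk_pos_repr hp j with ⟨hb, _, _⟩ | ⟨q, hb, hrep, hlt⟩
  · omega
  · rw [hb]
    by_contra h
    have hq : k - 1 ≤ q := by omega
    have h2 : p * (k - 1) ≤ p * q := Nat.mul_le_mul_left p hq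
    have h3 : p * (k - 1) = p * k - p := by rw [Nat.mul_sub]; ring_nf
    have h4 : p * k = k * p := Nat.mul_comm p k
    omega

/-- `j` is the last column of its block. -/
def IsLast (p j : ℕ) : Prop :=
  (blkIdx p j = 0 ∧ posIdx p j = p - 2) ∨ (blkIdx p j ≠ 0 ∧ posIdx p j = p - 1)

instance (p j : ℕ) : Decidable (IsLast p j) := by unfold IsLast; infer_instance

lemma succ_lt_of_not_last (hp : 2 ≤ p) (hk : 2 ≤ k) {j : ℕ} (hj : j < k * p - 1)
    (hl : ¬ IsLast p j) : j + 1 < k * p - 1 := by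
  by_contra h
  have hkp : k * p = p * k := Nat.mul_comm k p
  have hj' : j = k * p - 2 := by omega
  apply hl
  right
  have h4 : p * 2 ≤ p * k := Nat.mul_le_mul_left p hk
  have hge : ¬ (j < p - 1) := by omega
  have h3 : p * (k - 2) = p * k - p * 2 := by rw [Nat.mul_sub]
  have e1 : p - 1 + p * (k - 2) = j - (p - 1) := by omega
  have e2 : p - 1 < p := by omega
  have hA : (j - (p - 1)) / p = k - 2 ∧ (j - (p - 1)) % p = p - 1 :=
    (Nat.div_mod_unique (by omega)).mpr ⟨e1, e2⟩
  constructor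
  · simp [blkIdx, hge, hA.1]
  · simp [posIdx, hge, hA.2]

lemma not_last_succ_hyp (hp : 2 ≤ p) {j : ℕ} (hl : ¬ IsLast p j) :
    posIdx p j + 1 < p ∧ (blkIdx p j = 0 → posIdx p j + 1 < p - 1) := by
  rw [IsLast] at hl
  push_neg at hl
  constructor
  · rcases blk_pos_repr hp j with ⟨hb, _, _⟩ | ⟨q, hb, _, hlt⟩
    · have := pos_lt_of_blk0 hp hb
      omega
    · have := hl.2 (by omega)
      omega
  · intro hb
    have := pos_lt_of_blk0 hp hb
    have := hl.1 hb
    omega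

end Aux
section Aux2

variable {p k : ℕ}

lemma blk_pos_lastpoint (hp : 3 ≤ p) {b : ℕ} (hb : 1 ≤ b) :
    blkIdx p (b * p + (p - 2)) = b ∧ posIdx p (b * p + (p - 2)) = p - 1 := by
  have hpb : p * 1 ≤ p * b := Nat.mul_le_mul_left p hb
  have hcomm : b * p = p * b := Nat.mul_comm b p
  have hms : p * (b - 1) = p * b - p * 1 := Nat.mul_sub p b 1
  have hge : ¬ (b * p + (p - 2) < p - 1) := by omega
  have e1 : p - 1 + p * (b - 1) = b * p + (p - 2) - (p - 1) := by omega
  have e2 : p - 1 < p := by omega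
  have hA := (Nat.div_mod_unique (show 0 < p by omega)).mpr ⟨e1, e2⟩
  constructor
  · rw [blkIdx, if_neg hge, hA.1]; omega
  · rw [posIdx, if_neg hge, hA.2]

lemma blk_pos_bp (hp : 3 ≤ p) {b : ℕ} (hb : 1 ≤ b) :
    blkIdx p (b * p) = b ∧ posIdx p (b * p) = 1 := by
  have hpb : p * 1 ≤ p * b := Nat.mul_le_mul_left p hb
  have hcomm : b * p = p * b := Nat.mul_comm b p
  have hms : p * (b - 1) = p * b - p * 1 := Nat.mul_sub p b 1
  have hge : ¬ (b * p < p - 1) := by omega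
  have e1 : 1 + p * (b - 1) = b * p - (p - 1) := by omega
  have e2 : 1 < p := by omega
  have hA := (Nat.div_mod_unique (show 0 < p by omega)).mpr ⟨e1, e2⟩
  constructor
  · rw [blkIdx, if_neg hge, hA.1]; omega
  · rw [posIdx, if_neg hge, hA.2]

lemma blk_zero (hp : 3 ≤ p) : blkIdx p 0 = 0 := by
  simp [blkIdx, show 0 < p - 1 by omega]

lemma pos_zero (hp : 3 ≤ p) : posIdx p 0 = 0 := by
  simp [posIdx, show 0 < p - 1 by omega]

lemma blk_one (hp : 3 ≤ p) : blkIdx p 1 = 0 := by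
  simp [blkIdx, show 1 < p - 1 by omega]

lemma pos_one (hp : 3 ≤ p) : posIdx p 1 = 1 := by
  simp [posIdx, show 1 < p - 1 by omega]

lemma lt_N_of_lastpoint (hp : 3 ≤ p) (hk : 2 ≤ k) {b : ℕ} (hb : b < k) :
    b * p + (p - 2) < k * p - 1 := by
  have h1 : (b + 1) * p ≤ k * p := Nat.mul_le_mul_right p (by omega)
  have h2 : (b + 1) * p = b * p + p := Nat.succ_mul b p
  have h3 : 2 * 3 ≤ k * p := Nat.mul_le_mul hk hp
  omega

lemma card_last (hp : 3 ≤ p) (hk : 2 ≤ k) :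
    (Finset.univ.filter fun j : Fin (k * p - 1) => IsLast p (j : ℕ)).card = k := by
  conv_rhs => rw [← Finset.card_range k]
  refine Finset.card_bij'
    (s := Finset.univ.filter fun j : Fin (k * p - 1) => IsLast p (j : ℕ))
    (t := Finset.range k)
    (fun (j : Fin (k * p - 1)) _ => blkIdx p (j : ℕ))
    (fun b hb => (⟨b * p + (p - 2), lt_N_of_lastpoint hp hk (Finset.mem_range.mp hb)⟩ :
      Fin (k * p - 1))) ?_ ?_ ?_ ?_
  · -- maps into range k
    intro j hj
    exact Finset.mem_range.mpr (blk_lt (by omega) (by omega) j.isLt)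
  · -- maps into filter
    intro b hb
    simp only [Finset.mem_filter, Finset.mem_univ, true_and]
    rcases Nat.eq_zero_or_pos b with rfl | hb1
    · left
      have h0 : (0 * p + (p - 2)) = p - 2 := by omega
      constructor
      · show blkIdx p (0 * p + (p - 2)) = 0
        rw [h0]; simp [blkIdx, show p - 2 < p - 1 by omega]
      · show posIdx p (0 * p + (p - 2)) = p - 2
        rw [h0]; simp [posIdx, show p - 2 < p - 1 by omega]
    · right
      obtain ⟨h1, h2⟩ := blk_pos_lastpoint hp hb1
      exact ⟨by rw [h1]; omega, h2⟩
  · -- left inverse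
    intro j hj
    simp only [Finset.mem_filter, Finset.mem_univ, true_and] at hj
    apply Fin.ext
    show blkIdx p (j : ℕ) * p + (p - 2) = (j : ℕ)
    rcases blk_pos_repr (show 2 ≤ p by omega) (j : ℕ) with ⟨hb, hpos, hlt⟩ | ⟨q, hb, hrep, hlt⟩
    · rcases hj with ⟨_, h2⟩ | ⟨h1, _⟩
      · rw [hb]; omega
      · exact absurd hb h1
    · rcases hj with ⟨h1, _⟩ | ⟨_, h2⟩
      · rw [hb] at h1; omega
      · rw [hb]
        have : (q + 1) * p = q * p + p := Nat.succ_mul q p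
        have : q * p = p * q := Nat.mul_comm q p
        omega
  · -- right inverse
    intro b hb
    rcases Nat.eq_zero_or_pos b with rfl | hb1
    · show blkIdx p (0 * p + (p - 2)) = 0
      have h0 : (0 * p + (p - 2)) = p - 2 := by omega
      rw [h0]; simp [blkIdx, show p - 2 < p - 1 by omega]
    · exact (blk_pos_lastpoint hp hb1).1

end Aux2
section Aux3

variable {F : Type*} [Field F] {p k : ℕ}

lemma lmat_last_col (hp : 3 ≤ p) (α : ℕ → F) (i j : Fin (k * p - 1))
    (hl : IsLast p (j : ℕ)) : Lmat F p k α i j = 0 := by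
  have hC1 : ¬ (blkIdx p (i : ℕ) = blkIdx p (j : ℕ) ∧
      posIdx p (i : ℕ) = posIdx p (j : ℕ) + 1) := by
    rintro ⟨h1, h2⟩
    rcases hl with ⟨hb, hpos⟩ | ⟨hb, hpos⟩
    · have := pos_lt_of_blk0 (show 2 ≤ p by omega) (h1.trans hb)
      omega
    · have := pos_lt (p := p) (show 2 ≤ p by omega) (i : ℕ)
      omega
  have hC2 : ¬ (blkIdx p (j : ℕ) ≠ 0 ∧ blkIdx p (i : ℕ) = 0 ∧ posIdx p (j : ℕ) = 0 ∧
      posIdx p (i : ℕ) ≤ 1) := by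
    rintro ⟨h1, h2, h3, h4⟩
    rcases hl with ⟨hb, hpos⟩ | ⟨hb, hpos⟩
    · exact h1 hb
    · omega
  rw [Lmat]
  rw [if_neg hC1, if_neg hC2]

lemma lmat_row (hp : 3 ≤ p) (hk : 2 ≤ k) (α : ℕ → F) (i : Fin (k * p - 1))
    (h1 : 1 ≤ posIdx p (i : ℕ)) (h2 : ¬ (blkIdx p (i : ℕ) = 0 ∧ posIdx p (i : ℕ) = 1))
    (G : Fin (k * p - 1) → F) :
    ∑ j, G j * Lmat F p k α i j
      = G ⟨(i : ℕ) - 1, by omega⟩ * α (blkIdx p (i : ℕ)) := by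
  obtain ⟨hi1, hbp, hpp⟩ := blk_pos_pred (show 2 ≤ p by omega) h1
  rw [Finset.sum_eq_single (⟨(i : ℕ) - 1, by omega⟩ : Fin (k * p - 1))]
  · congr 1
    rw [Lmat, if_pos]
    exact ⟨hbp.symm, hpp.symm⟩
  · intro j _ hne
    have hz : Lmat F p k α i j = 0 := by
      have hC1 : ¬ (blkIdx p (i : ℕ) = blkIdx p (j : ℕ) ∧
          posIdx p (i : ℕ) = posIdx p (j : ℕ) + 1) := by
        rintro ⟨a, b⟩
        apply hne
        apply Fin.ext
        show (j : ℕ) = (i : ℕ) - 1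
        apply blk_pos_inj (show 2 ≤ p by omega)
        · rw [← a, hbp]
        · omega
      have hC2 : ¬ (blkIdx p (j : ℕ) ≠ 0 ∧ blkIdx p (i : ℕ) = 0 ∧ posIdx p (j : ℕ) = 0 ∧
          posIdx p (i : ℕ) ≤ 1) := by
        rintro ⟨a, b, c, d⟩
        exact h2 ⟨b, by omega⟩
      rw [Lmat, if_neg hC1, if_neg hC2]
    rw [hz, mul_zero]
  · intro h
    exact absurd (Finset.mem_univ _) h

lemma core_indep (hp : 3 ≤ p) (hk : 2 ≤ k) (α : ℕ → F) (hα : ∀ b < k, α b ≠ 0)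
    (G : Fin (k * p - 1) → F)
    (hrow : ∀ i : Fin (k * p - 1), ∑ j, G j * Lmat F p k α i j = 0)
    (hlast : ∀ j : Fin (k * p - 1), IsLast p (j : ℕ) → G j = 0) :
    ∀ j, G j = 0 := by
  have hp2 : 2 ≤ p := by omega
  have h6 : 2 * 3 ≤ k * p := Nat.mul_le_mul hk hp
  have hN : 5 ≤ k * p - 1 := by omega
  set i0 : Fin (k * p - 1) := ⟨0, by omega⟩ with hi0
  set i1 : Fin (k * p - 1) := ⟨1, by omega⟩ with hi1
  have hv0b : blkIdx p (i0 : ℕ) = 0 := blk_zero hp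
  have hv0p : posIdx p (i0 : ℕ) = 0 := pos_zero hp
  have hv1b : blkIdx p (i1 : ℕ) = 0 := blk_one hp
  have hv1p : posIdx p (i1 : ℕ) = 1 := pos_one hp
  -- step 1 : G i0 = 0
  have hG0 : G i0 = 0 := by
    have hL1 : ∀ j : Fin (k * p - 1), (j : ℕ) ≠ 0 →
        Lmat F p k α i1 j = Lmat F p k α i0 j := by
      intro j hj
      have hC1 : ¬ (blkIdx p (i1 : ℕ) = blkIdx p (j : ℕ) ∧
          posIdx p (i1 : ℕ) = posIdx p (j : ℕ) + 1) := by
        rintro ⟨a, b⟩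
        exact hj (blk_pos_inj hp2 (by rw [← a, hv1b, blk_zero hp])
          (by rw [pos_zero hp]; omega))
      have hC0 : ¬ (blkIdx p (i0 : ℕ) = blkIdx p (j : ℕ) ∧
          posIdx p (i0 : ℕ) = posIdx p (j : ℕ) + 1) := by
        rintro ⟨a, b⟩
        omega
      simp only [Lmat]
      rw [if_neg hC1, if_neg hC0]
      apply if_congr _ rfl rfl
      rw [hv1b, hv1p, hv0b, hv0p]
      simp
    have key : ∑ j, (G j * Lmat F p k α i1 j - G j * Lmat F p k α i0 j) = G i0 * α 0 := by
      rw [Finset.sum_eq_single i0]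
      · have hv1 : Lmat F p k α i1 i0 = α 0 := by
          rw [Lmat, if_pos ⟨by rw [hv1b, hv0b], by rw [hv1p, hv0p]⟩, hv1b]
        have hv0 : Lmat F p k α i0 i0 = 0 := by
          rw [Lmat, if_neg (by rintro ⟨a, b⟩; omega), if_neg (by rintro ⟨a, b, c⟩; exact a hv0b)]
        rw [hv1, hv0]
        ring
      · intro j _ hne
        rw [hL1 j (fun h => hne (Fin.ext h))]
        ring
      · intro h
        exact absurd (Finset.mem_univ _) h
    rw [Finset.sum_sub_distrib, hrow i1, hrow i0, sub_zero] at key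
    have := hα 0 (by omega)
    rcases mul_eq_zero.mp key.symm with h | h
    · exact h
    · exact absurd h this
  -- step 2 : general j
  intro j
  by_cases hl : IsLast p (j : ℕ)
  · exact hlast j hl
  by_cases hj0 : (j : ℕ) = 0
  · have : j = i0 := Fin.ext hj0
    rw [this]; exact hG0
  -- main case
  obtain ⟨hs1, hs2⟩ := blk_pos_succ hp2 (not_last_succ_hyp hp2 hl).1 (not_last_succ_hyp hp2 hl).2
  set i : Fin (k * p - 1) := ⟨(j : ℕ) + 1, succ_lt_of_not_last hp2 hk j.isLt hl⟩ with hidef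
  have hiv : (i : ℕ) = (j : ℕ) + 1 := rfl
  have h1 : 1 ≤ posIdx p (i : ℕ) := by rw [hiv, hs2]; omega
  have h2 : ¬ (blkIdx p (i : ℕ) = 0 ∧ posIdx p (i : ℕ) = 1) := by
    rintro ⟨a, b⟩
    rw [hiv, hs1] at a
    rw [hiv, hs2] at b
    exact hj0 (blk_pos_inj hp2 (by rw [a, blk_zero hp]) (by rw [pos_zero hp]; omega))
  have hrw := lmat_row hp hk α i h1 h2 G
  rw [hrow i] at hrw
  have hpred : (⟨(i : ℕ) - 1, by omega⟩ : Fin (k * p - 1)) = j := by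
    apply Fin.ext
    show (i : ℕ) - 1 = (j : ℕ)
    omega
  rw [hpred] at hrw
  have hblk : blkIdx p (i : ℕ) < k := blk_lt hp2 (by omega) i.isLt
  rcases mul_eq_zero.mp hrw.symm with h | h
  · exact h
  · exact absurd h (hα _ hblk)

end Aux3
open Matrix
section Aux4

variable {F : Type*} [Field F] {p k : ℕ}

lemma col_zero (α : ℕ → F) (j : Fin (k * p - 1)) (hz : α (blkIdx p (j : ℕ)) = 0)
    (h2 : blkIdx p (j : ℕ) = 0 ∨ posIdx p (j : ℕ) ≠ 0) :
    ∀ i, Lmat F p k α i j = 0 := by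
  intro i
  simp only [Lmat]
  split_ifs with a b
  · rw [a.1]; exact hz
  · rcases h2 with h2 | h2
    · exact absurd h2 b.1
    · exact absurd b.2.2.1 h2
  · rfl

end Aux4

/-- Let `p` be an odd prime, `k ≥ 2`, `F` of characteristic `p`, and `L` the
block matrix described above.  Then `rank(L) ≤ (k-1)(p-1) + (p-2)`, with equality if and only
if `α_1 α_2 ⋯ α_k ≠ 0`. -/
theorem stmt14 (F : Type*) [Field F] (p k : ℕ) [CharP F p] (hp : p.Prime) (hodd : Odd p)
    (hk : 2 ≤ k) (α : ℕ → F) :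
    (Lmat F p k α).rank ≤ (k - 1) * (p - 1) + (p - 2) ∧
    ((Lmat F p k α).rank = (k - 1) * (p - 1) + (p - 2) ↔
      ∏ i ∈ Finset.range k, α i ≠ 0) := by
  classical
  have hp3 : 3 ≤ p := by
    have h2 := hp.two_le
    have h3 := Nat.odd_iff.mp hodd
    omega
  have hp2 : 2 ≤ p := by omega
  have h6 : 2 * 3 ≤ k * p := Nat.mul_le_mul hk hp3
  have htarget : (k - 1) * (p - 1) + (p - 2) = (k * p - 1) - k := by
    obtain ⟨k', rfl⟩ := Nat.exists_eq_add_of_le hk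
    obtain ⟨p', rfl⟩ := Nat.exists_eq_add_of_le hp3
    have e1 : (2 + k' - 1) * (3 + p' - 1) = (k' + 1) * (p' + 2) := by
      congr 1 <;> omega
    have e2 : (k' + 1) * (p' + 2) = k' * p' + 2 * k' + p' + 2 := by ring
    have e3 : (2 + k') * (3 + p') = k' * p' + 3 * k' + 2 * p' + 6 := by ring
    omega
  set S : Finset (Fin (k * p - 1)) := Finset.univ.filter
      (fun j : Fin (k * p - 1) => ¬ IsLast p (j : ℕ)) with hSdef
  have hScard : S.card = (k * p - 1) - k := by
    have hsum := Finset.card_filter_add_card_filter_not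
      (s := (Finset.univ : Finset (Fin (k * p - 1))))
      (p := fun j : Fin (k * p - 1) => IsLast p (j : ℕ))
    rw [card_last hp3 hk] at hsum
    have hcu : (Finset.univ : Finset (Fin (k * p - 1))).card = k * p - 1 := by simp
    have : S.card = Finset.card (Finset.univ.filter
        (fun j : Fin (k * p - 1) => ¬ IsLast p (j : ℕ))) := by rw [hSdef]
    omega
  have hzero : ∀ jl : Fin (k * p - 1), jl ∉ S → (Lmat F p k α)ᵀ jl = 0 := by
    intro jl hjl
    have hl : IsLast p (jl : ℕ) := by
      by_contra h
      exact hjl (Finset.mem_filter.mpr ⟨Finset.mem_univ _, h⟩)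
    funext i
    simp only [Matrix.transpose_apply, Pi.zero_apply]
    exact lmat_last_col hp3 α i jl hl
  have hspan : ∀ s : Finset (Fin (k * p - 1)), (∀ j, j ∉ s → (Lmat F p k α)ᵀ j = 0) →
      Submodule.span F (Set.range (Lmat F p k α)ᵀ)
        = Submodule.span F ((Lmat F p k α)ᵀ '' ↑s) := by
    intro s hs
    apply le_antisymm
    · rw [Submodule.span_le]
      rintro v ⟨j, rfl⟩
      by_cases hj : j ∈ s
      · exact Submodule.subset_span ⟨j, hj, rfl⟩
      · rw [hs j hj]; exact (Submodule.span F _).zero_mem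
    · exact Submodule.span_mono (Set.image_subset_range _ _)
  have hrank_le : ∀ s : Finset (Fin (k * p - 1)), (∀ j, j ∉ s → (Lmat F p k α)ᵀ j = 0) →
      (Lmat F p k α).rank ≤ s.card := by
    intro s hs
    rw [Matrix.rank_eq_finrank_span_cols, Matrix.col, hspan s hs]
    have h1 := finrank_span_finset_le_card (R := F) (s.image (fun j => (Lmat F p k α)ᵀ j))
    rw [Set.finrank, Finset.coe_image] at h1
    exact le_trans h1 Finset.card_image_le
  have hub : (Lmat F p k α).rank ≤ S.card := hrank_le S hzero
  refine ⟨by rw [htarget, ← hScard]; exact hub, ?_, ?_⟩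
  · -- rank = target → product nonzero
    intro hrk hprod0
    obtain ⟨b, hbmem, hzb⟩ := Finset.prod_eq_zero_iff.mp hprod0
    rw [Finset.mem_range] at hbmem
    obtain ⟨j0, hj0S, hj0z⟩ : ∃ j0 : Fin (k * p - 1), j0 ∈ S ∧ (Lmat F p k α)ᵀ j0 = 0 := by
      rcases Nat.eq_zero_or_pos b with rfl | hb1
      · refine ⟨⟨0, by omega⟩, ?_, ?_⟩
        · refine Finset.mem_filter.mpr ⟨Finset.mem_univ _, ?_⟩
          have hb0 : blkIdx p ((⟨0, by omega⟩ : Fin (k * p - 1)) : ℕ) = 0 := blk_zero hp3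
          have hpo : posIdx p ((⟨0, by omega⟩ : Fin (k * p - 1)) : ℕ) = 0 := pos_zero hp3
          rintro (⟨h1, h2⟩ | ⟨h1, h2⟩)
          · rw [hpo] at h2; omega
          · exact h1 hb0
        · funext i
          simp only [Matrix.transpose_apply, Pi.zero_apply]
          exact col_zero α _ (by rw [blk_zero hp3]; exact hzb) (Or.inl (blk_zero hp3)) i
      · have hlt : b * p < k * p - 1 := by
          have := lt_N_of_lastpoint hp3 hk hbmem
          omega
        have hbp := blk_pos_bp (p := p) hp3 hb1
        refine ⟨⟨b * p, hlt⟩, ?_, ?_⟩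
        · refine Finset.mem_filter.mpr ⟨Finset.mem_univ _, ?_⟩
          rintro (⟨h1, h2⟩ | ⟨h1, h2⟩)
          · rw [hbp.1] at h1; omega
          · rw [hbp.2] at h2; omega
        · funext i
          simp only [Matrix.transpose_apply, Pi.zero_apply]
          exact col_zero α _ (by rw [hbp.1]; exact hzb) (Or.inr (by rw [hbp.2]; omega)) i
    have hra : (Lmat F p k α).rank ≤ (S.erase j0).card := by
      apply hrank_le
      intro j hj
      by_cases hjS : j ∈ S
      · have : j = j0 := by
          by_contra hne
          exact hj (Finset.mem_erase.mpr ⟨hne, hjS⟩)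
        rw [this]; exact hj0z
      · exact hzero j hjS
    rw [Finset.card_erase_of_mem hj0S] at hra
    rw [htarget, ← hScard] at hrk
    have hS1 : 1 ≤ S.card := by
      rw [hScard]
      have h3k : k * 3 ≤ k * p := Nat.mul_le_mul_left k hp3
      omega
    omega
  · -- product nonzero → rank = target
    intro hprod
    have hα : ∀ b < k, α b ≠ 0 := by
      intro b hb hzb
      exact hprod (Finset.prod_eq_zero (Finset.mem_range.mpr hb) hzb)
    have hrange : (Lmat F p k α)ᵀ '' ↑S
        = Set.range (fun x : {j // j ∈ S} => (Lmat F p k α)ᵀ ↑x) := by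
      ext v
      constructor
      · rintro ⟨j, hj, rfl⟩
        exact ⟨⟨j, hj⟩, rfl⟩
      · rintro ⟨x, rfl⟩
        exact ⟨↑x, x.2, rfl⟩
    have hli : LinearIndependent F (fun x : {j // j ∈ S} => (Lmat F p k α)ᵀ ↑x) := by
      rw [Fintype.linearIndependent_iff]
      intro g hg
      set G : Fin (k * p - 1) → F := fun j => if h : j ∈ S then g ⟨j, h⟩ else 0 with hGdef
      have hGS : ∀ (x : {j // j ∈ S}), G ↑x = g x := by
        intro x
        rw [hGdef]
        simp only [dif_pos x.2]
      have hrowG : ∀ i, ∑ j, G j * Lmat F p k α i j = 0 := by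
        intro i
        have h0 := congrFun hg i
        rw [Finset.sum_apply] at h0
        rw [Pi.zero_apply] at h0
        have hstep : ∑ j, G j * Lmat F p k α i j = ∑ j ∈ S, G j * Lmat F p k α i j := by
          symm
          apply Finset.sum_subset (Finset.subset_univ S)
          intro j _ hjS
          rw [hGdef]
          simp only [dif_neg hjS, zero_mul]
        rw [hstep, ← Finset.sum_attach S (fun j => G j * Lmat F p k α i j), ← h0,
          Finset.univ_eq_attach]
        apply Finset.sum_congr rfl
        intro x _
        rw [hGS]
        simp [Matrix.transpose_apply, mul_comm]
      have hlastG : ∀ j : Fin (k * p - 1), IsLast p (j : ℕ) → G j = 0 := by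
        intro j hl
        have hjS : j ∉ S := by
          rw [hSdef]
          simp [hl]
        rw [hGdef]
        simp only [dif_neg hjS]
      have hall := core_indep hp3 hk α hα G hrowG hlastG
      intro x
      rw [← hGS x]
      exact hall ↑x
    have heq : (Lmat F p k α).rank = S.card := by
      rw [Matrix.rank_eq_finrank_span_cols, Matrix.col, hspan S hzero, hrange,
        finrank_span_eq_card hli, Fintype.card_coe]
    rw [htarget, ← hScard, heq]
end

section
/- For k ≥ 2 and p an odd prime, the intersection of V(p_k) with V(x_1 x_2 ⋯ x_k) in A^k(F) equals the union over all pairs 1 ≤ i ≠ j ≤ k of the codimension-2 coordinate subspaces V(x_i, x_j). -/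
/-- For `k ≥ 2` and `p` an odd prime, over an algebraically closed field `F`
of characteristic `p`, the intersection of `V(p_k)` (where
`p_k = Σ_{i=1}^{k} (x_1 ⋯ x̂_i ⋯ x_k)^{p-1}`) with `V(x_1 x_2 ⋯ x_k)` in `𝔸^k(F)` equals the
union over all pairs `1 ≤ i ≠ j ≤ k` of the codimension-2 coordinate subspaces
`V(x_i, x_j)`. -/
theorem stmt18 (F : Type*) [Field F] [IsAlgClosed F] (p k : ℕ) [CharP F p] (hp : p.Prime)
    (hodd : Odd p) (hk : 2 ≤ k) :
    {x : Fin k → F | (∑ i : Fin k, ∏ j ∈ Finset.univ.erase i, x j ^ (p - 1)) = 0} ∩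
        {x : Fin k → F | (∏ i : Fin k, x i) = 0} =
      ⋃ (i : Fin k) (j : Fin k) (_ : i ≠ j), {x : Fin k → F | x i = 0 ∧ x j = 0} := by
  have hp1 : p - 1 ≠ 0 := by
    have := hp.two_le; omega
  ext x
  simp only [Set.mem_inter_iff, Set.mem_setOf_eq, Set.mem_iUnion]
  constructor
  · rintro ⟨hs, hprod⟩
    obtain ⟨m, -, hm⟩ := Finset.prod_eq_zero_iff.mp hprod
    by_contra hcon
    push_neg at hcon
    have hne : ∀ j, j ≠ m → x j ≠ 0 := by
      intro j hj hj0
      exact hcon m j (Ne.symm hj) hm hj0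
    have hsum : (∑ i : Fin k, ∏ j ∈ Finset.univ.erase i, x j ^ (p - 1))
        = ∏ j ∈ Finset.univ.erase m, x j ^ (p - 1) := by
      refine Finset.sum_eq_single m (fun i _ hi => ?_) (by simp)
      refine Finset.prod_eq_zero (Finset.mem_erase.mpr ⟨Ne.symm hi, Finset.mem_univ m⟩) ?_
      rw [hm, zero_pow hp1]
    rw [hsum] at hs
    exact (Finset.prod_ne_zero_iff.mpr fun j hj =>
      pow_ne_zero _ (hne j (Finset.mem_erase.mp hj).1)) hs
  · rintro ⟨i, j, hij, hi, hj⟩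
    refine ⟨Finset.sum_eq_zero fun m _ => ?_, Finset.prod_eq_zero (Finset.mem_univ i) hi⟩
    rcases ne_or_eq m i with h | h
    · exact Finset.prod_eq_zero (Finset.mem_erase.mpr ⟨Ne.symm h, Finset.mem_univ i⟩)
        (by rw [hi, zero_pow hp1])
    · exact Finset.prod_eq_zero (Finset.mem_erase.mpr ⟨by rw [h]; exact (Ne.symm hij), Finset.mem_univ j⟩)
        (by rw [hj, zero_pow hp1])
end
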